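/- Let ((X_t)_{t≥0}, (L^t_1,…,L^t_n)_{t≥0}) be an instance of an n-dimensional GLexRSM for a stopping time T, and suppose P[T = ∞] > 0. Then there exist an index 1 ≤ k ≤ n and natural numbers s, M such that the set B of all ω ∈ Ω satisfying (1) T(ω) = ∞, (2) X_s[k](ω) ≤ M, (3) for each t ≥ s the level of ω at step t is at least k, and (4) the level of ω equals k at infinitely many steps t, has positive measure, i.e. P[B] > 0. -/

import Mathlib

open MeasureTheory Set
open scoped ENNReal

/-- An instance of an `n`-dimensional generalized lexicographic ranking supermartingale
(GLexRSM) for a stopping time `T` (with values in `ℕ∞`): the process `X` together with the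
`ℱ t`-measurable sets `L t j` partitioning `{T > t}`, satisfying measurability/integrability,
the lexicographic expected decrease conditions, partial non-negativity, and expected leftward
non-negativity. -/
def IsGLexRSMInstance {Ω : Type*} {m : MeasurableSpace Ω} (μ : Measure Ω)
    (ℱ : Filtration ℕ m) (T : Ω → ℕ∞) {n : ℕ}
    (X : ℕ → Fin n → Ω → ℝ) (L : ℕ → Fin n → Set Ω) : Prop :=
  -- the sets `L t j` partition `{T > t}`
  (∀ t : ℕ, (⋃ j, L t j) = {ω | (t : ℕ∞) < T ω}) ∧
  (∀ t : ℕ, ∀ j j' : Fin n, j ≠ j' → Disjoint (L t j) (L t j')) ∧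
  (∀ t : ℕ, ∀ j : Fin n, MeasurableSet[ℱ t] (L t j)) ∧
  -- (1) each `X t j` is `ℱ t`-measurable
  (∀ t : ℕ, ∀ j : Fin n, StronglyMeasurable[ℱ t] (X t j)) ∧
  -- (2) the relevant conditional expectations exist: each `X t j` is integrable
  (∀ t : ℕ, ∀ j : Fin n, Integrable (X t j) μ) ∧
  -- (3a) expected non-increase on `⋃_{j' ≥ j} L t j'`
  (∀ t : ℕ, ∀ j : Fin n, ∀ ω ∈ ⋃ j' ≥ j, L t j',
      (μ[X (t + 1) j | ℱ t]) ω ≤ X t j ω) ∧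
  -- (3b) expected decrease by 1 on `L t j`
  (∀ t : ℕ, ∀ j : Fin n, ∀ ω ∈ L t j,
      (μ[X (t + 1) j | ℱ t]) ω ≤ X t j ω - 1) ∧
  -- (3c) non-negativity on `⋃_{j' ≥ j} L t j'`
  (∀ t : ℕ, ∀ j : Fin n, ∀ ω ∈ ⋃ j' ≥ j, L t j', 0 ≤ X t j ω) ∧
  -- (3d) expected leftward non-negativity, where `L (t+1) 0 = {T ≤ t+1}`
  (∀ t : ℕ, ∀ j : Fin n, ∀ ω ∈ ⋃ j' ≥ j, L t j',
      0 ≤ (μ[Set.indicator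
              ({ω' | T ω' ≤ ((t + 1 : ℕ) : ℕ∞)} ∪ ⋃ j' < j, L (t + 1) j')
              (X (t + 1) j) | ℱ t]) ω)

/-- If a GLexRSM instance exists for `T` but `P[T = ∞] > 0`, then there exist a component
`k`, a time `s`, and a bound `M` such that the set `B` of runs `ω` with (1) `T ω = ∞`,
(2) `X s k ω ≤ M`, (3) level of `ω` at every step `t ≥ s` is at least `k`, and
(4) the level of `ω` equals `k` at infinitely many steps, has positive measure. -/
theorem glexrsm_exists_positive_measure_level_set
    {Ω : Type*} {m : MeasurableSpace Ω} (μ : Measure Ω) [IsProbabilityMeasure μ]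
    (ℱ : Filtration ℕ m) (T : Ω → ℕ∞)
    (hT : ∀ t : ℕ, MeasurableSet[ℱ t] {ω | T ω ≤ (t : ℕ∞)})
    {n : ℕ} (X : ℕ → Fin n → Ω → ℝ) (L : ℕ → Fin n → Set Ω)
    (hinst : IsGLexRSMInstance μ ℱ T X L)
    (hpos : 0 < μ {ω | T ω = ⊤}) :
    ∃ (k : Fin n) (s M : ℕ),
      0 < μ {ω | T ω = ⊤ ∧ X s k ω ≤ (M : ℝ) ∧
        (∀ t : ℕ, s ≤ t → ω ∈ ⋃ j' ≥ k, L t j') ∧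
        {t : ℕ | ω ∈ L t k}.Infinite} := by
  by_contra hcon
  push_neg at hcon
  have hzero : ∀ (k : Fin n) (s M : ℕ), μ {ω | T ω = ⊤ ∧ X s k ω ≤ (M : ℝ) ∧
      (∀ t : ℕ, s ≤ t → ω ∈ ⋃ j' ≥ k, L t j') ∧
      {t : ℕ | ω ∈ L t k}.Infinite} = 0 :=
    fun k s M => le_antisymm (hcon k s M) zero_le
  have hpart := hinst.1
  have hsub : {ω | T ω = ⊤} ⊆ ⋃ (k : Fin n) (s : ℕ) (M : ℕ),
      {ω | T ω = ⊤ ∧ X s k ω ≤ (M : ℝ) ∧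
      (∀ t : ℕ, s ≤ t → ω ∈ ⋃ j' ≥ k, L t j') ∧
      {t : ℕ | ω ∈ L t k}.Infinite} := by
    intro ω hω
    have hωT : T ω = ⊤ := hω
    have hmem : ∀ t : ℕ, ∃ j : Fin n, ω ∈ L t j := by
      intro t
      have : ω ∈ ⋃ j, L t j := by
        rw [hpart t]
        simp only [Set.mem_setOf_eq, hωT]
        exact lt_top_iff_ne_top.2 (by simp)
      exact Set.mem_iUnion.1 this
    have hinf : ∃ j : Fin n, {t | ω ∈ L t j}.Infinite := by
      by_contra h
      push_neg at h
      have hfin : (⋃ j, {t | ω ∈ L t j}).Finite := Set.finite_iUnion h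
      have huniv : (Set.univ : Set ℕ) ⊆ ⋃ j, {t | ω ∈ L t j} := fun t _ => by
        obtain ⟨j, hj⟩ := hmem t; exact Set.mem_iUnion.2 ⟨j, hj⟩
      exact Set.infinite_univ (hfin.subset huniv)
    obtain ⟨k, hk, hkmin⟩ := Set.exists_min_image {j : Fin n | {t | ω ∈ L t j}.Infinite}
      id (Set.toFinite _) hinf
    have hbadfin : (⋃ j ∈ {j : Fin n | j < k}, {t | ω ∈ L t j}).Finite := by
      refine Set.Finite.biUnion (Set.toFinite _) fun j hj => ?_
      by_contra h
      exact absurd (hkmin j h) (not_le.2 hj)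
    obtain ⟨s0, hs0⟩ := hbadfin.bddAbove
    have hlev : ∀ t : ℕ, s0 + 1 ≤ t → ω ∈ ⋃ j' ≥ k, L t j' := by
      intro t ht
      obtain ⟨j, hj⟩ := hmem t
      have hjk : k ≤ j := by
        by_contra hlt
        push_neg at hlt
        have htb : t ∈ ⋃ j ∈ {j : Fin n | j < k}, {t | ω ∈ L t j} :=
          Set.mem_biUnion hlt hj
        have := hs0 htb
        omega
      exact Set.mem_iUnion₂.2 ⟨j, hjk, hj⟩
    refine Set.mem_iUnion.2 ⟨k, Set.mem_iUnion.2 ⟨s0 + 1,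
      Set.mem_iUnion.2 ⟨⌈X (s0 + 1) k ω⌉₊, ?_⟩⟩⟩
    exact ⟨hωT, Nat.le_ceil _, hlev, hk⟩
  have hnull : μ {ω | T ω = ⊤} = 0 :=
    measure_mono_null hsub (measure_iUnion_null fun k =>
      measure_iUnion_null fun s => measure_iUnion_null fun M => hzero k s M)
  exact absurd hnull hpos.ne'
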